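/- Decomposition of closed substitutions: if Ψ is a parameter substitution with depth(Ψ) = n ≥ 1 and whose range contains no parameters, then there exist substitutions Φ₁ ∈ AllParSubst(dom(Ψ)) and Φ₂ with depth(Φ₂) = n − 1 such that Ψ = Φ₁ ∘ Φ₂. -/
import Mathlib


/-- Types over a type alphabet whose constructors are at most unary:
type parameters, nullary constructors and unary constructors. -/
inductive UTy (C : Type) where
  | param : ℕ → UTy C
  | con0 : C → UTy C
  | con1 : C → UTy C → UTy C
deriving DecidableEq

/-- The subtype relation on types (arguments are compared only up to the
minimum of the arities). -/
inductive USub {C : Type} [LE C] : UTy C → UTy C → Prop where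
  | param (n : ℕ) : USub (.param n) (.param n)
  | con00 {K L : C} : K ≤ L → USub (.con0 K) (.con0 L)
  | con01 {K L : C} {τ : UTy C} : K ≤ L → USub (.con0 K) (.con1 L τ)
  | con10 {K L : C} {σ : UTy C} : K ≤ L → USub (.con1 K σ) (.con0 L)
  | con11 {K L : C} {σ τ : UTy C} : K ≤ L → USub σ τ →
      USub (.con1 K σ) (.con1 L τ)

/-- Applying a parameter substitution to a type. -/
def UTy.subst {C : Type} (Φ : ℕ → UTy C) : UTy C → UTy C
  | .param n => Φ n
  | .con0 K => .con0 K
  | .con1 K σ => .con1 K (σ.subst Φ)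

/-- The list of type parameters of a type. -/
def UTy.params {C : Type} : UTy C → List ℕ
  | .param n => [n]
  | .con0 _ => []
  | .con1 _ σ => σ.params

/-- The depth of a type. -/
def UTy.depth {C : Type} : UTy C → ℕ
  | .param _ => 0
  | .con0 _ => 1
  | .con1 _ σ => 1 + σ.depth

/-- The domain of a parameter substitution. -/
def substDom {C : Type} (Φ : ℕ → UTy C) : Set ℕ := {n | Φ n ≠ .param n}

/-- `AllParSubst A` is the set of parameter substitutions `Φ` with
`dom(Φ) ⊆ A`, `depth(Φ) ≤ 1`, and `Par(αΦ) ⊆ {α}` but `αΦ ≠ α`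
for all `α ∈ A`. -/
def AllParSubst {C : Type} (A : Set ℕ) : Set (ℕ → UTy C) :=
  {Φ | substDom Φ ⊆ A ∧ (∀ m ∈ substDom Φ, (Φ m).depth ≤ 1) ∧
    ∀ a ∈ A, (∀ n ∈ (Φ a).params, n = a) ∧ Φ a ≠ .param a}

/-- A type inequation `σ ⪯ τ`. -/
abbrev UIneq (C : Type) := UTy C × UTy C

/-- A system of type inequations is solvable. -/
def USolvable {C : Type} [LE C] (I : Set (UIneq C)) : Prop :=
  ∃ Φ : ℕ → UTy C, ∀ p ∈ I, USub (p.1.subst Φ) (p.2.subst Φ)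

/-- The set of type parameters of a system of type inequations. -/
def sysParams {C : Type} (I : Set (UIneq C)) : Set ℕ :=
  {n | ∃ p ∈ I, n ∈ p.1.params ∨ n ∈ p.2.params}

/-- Applying a parameter substitution to a system of type inequations. -/
def applySys {C : Type} (Φ : ℕ → UTy C) (I : Set (UIneq C)) : Set (UIneq C) :=
  (fun p : UIneq C => (p.1.subst Φ, p.2.subst Φ)) '' I


private def phi1 {C : Type} (Ψ : ℕ → UTy C) (n : ℕ) : UTy C :=
  match Ψ n with
  | .param _ => .param n
  | .con0 K => .con0 K
  | .con1 K _ => .con1 K (.param n)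

private def phi2 {C : Type} (Ψ : ℕ → UTy C) (n : ℕ) : UTy C :=
  match Ψ n with
  | .con1 _ σ => σ
  | _ => .param n

private lemma phi1_param {C : Type} {Ψ : ℕ → UTy C} {n k : ℕ}
    (h : Ψ n = .param k) : phi1 Ψ n = .param n := by
  unfold phi1; rw [h]

private lemma phi1_con0 {C : Type} {Ψ : ℕ → UTy C} {n : ℕ} {K : C}
    (h : Ψ n = .con0 K) : phi1 Ψ n = .con0 K := by
  unfold phi1; rw [h]

private lemma phi1_con1 {C : Type} {Ψ : ℕ → UTy C} {n : ℕ} {K : C} {σ : UTy C}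
    (h : Ψ n = .con1 K σ) : phi1 Ψ n = .con1 K (.param n) := by
  unfold phi1; rw [h]

private lemma phi2_param {C : Type} {Ψ : ℕ → UTy C} {n k : ℕ}
    (h : Ψ n = .param k) : phi2 Ψ n = .param n := by
  unfold phi2; rw [h]

private lemma phi2_con0 {C : Type} {Ψ : ℕ → UTy C} {n : ℕ} {K : C}
    (h : Ψ n = .con0 K) : phi2 Ψ n = .param n := by
  unfold phi2; rw [h]

private lemma phi2_con1 {C : Type} {Ψ : ℕ → UTy C} {n : ℕ} {K : C} {σ : UTy C}
    (h : Ψ n = .con1 K σ) : phi2 Ψ n = σ := by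
  unfold phi2; rw [h]

/-- Decomposition of closed substitutions: if `Ψ` is a
parameter substitution of depth `d ≥ 1` whose range contains no parameters,
then there are `Φ₁ ∈ AllParSubst(dom Ψ)` and `Φ₂` of depth `d - 1` with
`Ψ = Φ₁ ∘ Φ₂`. -/
theorem closed_subst_decomposition {C : Type} (Ψ : ℕ → UTy C) (d : ℕ)
    (hd1 : 1 ≤ d)
    (hdepth_le : ∀ m ∈ substDom Ψ, (Ψ m).depth ≤ d)
    (hdepth_eq : ∃ m ∈ substDom Ψ, (Ψ m).depth = d)
    (hclosed : ∀ m ∈ substDom Ψ, (Ψ m).params = []) :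
    ∃ (Φ₁ Φ₂ : ℕ → UTy C), Φ₁ ∈ AllParSubst (C := C) (substDom Ψ) ∧
      (∀ m ∈ substDom Φ₂, (Φ₂ m).depth ≤ d - 1) ∧
      (d - 1 = 0 ∨ ∃ m ∈ substDom Φ₂, (Φ₂ m).depth = d - 1) ∧
      ∀ n, (Φ₁ n).subst Φ₂ = Ψ n := by
  classical
  refine ⟨phi1 Ψ, phi2 Ψ, ⟨?_, ?_, ?_⟩, ?_, ?_, ?_⟩
  · intro n hn
    by_contra hd
    simp only [substDom, Set.mem_setOf_eq, not_not] at hd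
    exact hn (phi1_param hd)
  · intro m _
    rcases h : Ψ m with k | K | ⟨K, σ⟩
    · rw [phi1_param h]; simp [UTy.depth]
    · rw [phi1_con0 h]; simp [UTy.depth]
    · rw [phi1_con1 h]; simp [UTy.depth]
  · intro a ha
    rcases h : Ψ a with k | K | ⟨K, σ⟩
    · have hc := hclosed a ha
      rw [h] at hc
      simp [UTy.params] at hc
    · rw [phi1_con0 h]; exact ⟨by simp [UTy.params], by simp⟩
    · rw [phi1_con1 h]; exact ⟨by simp [UTy.params], by simp⟩
  · intro m hm
    rcases h : Ψ m with k | K | ⟨K, σ⟩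
    · exact absurd (phi2_param h) hm
    · exact absurd (phi2_con0 h) hm
    · have hmem : m ∈ substDom Ψ := by simp [substDom, h]
      have := hdepth_le m hmem
      rw [h] at this
      simp only [UTy.depth] at this
      rw [phi2_con1 h]
      omega
  · by_cases hd2 : d = 1
    · exact Or.inl (by omega)
    · right
      obtain ⟨m, hm, hme⟩ := hdepth_eq
      rcases h : Ψ m with k | K | ⟨K, σ⟩
      · rw [h] at hme; simp [UTy.depth] at hme; omega
      · rw [h] at hme; simp [UTy.depth] at hme; omega
      · rw [h] at hme
        simp only [UTy.depth] at hme
        refine ⟨m, ?_, ?_⟩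
        · simp only [substDom, Set.mem_setOf_eq, phi2_con1 h]
          intro hσ
          rw [hσ] at hme
          simp [UTy.depth] at hme
          omega
        · rw [phi2_con1 h]; omega
  · intro n
    rcases h : Ψ n with k | K | ⟨K, σ⟩
    · by_cases hmem : n ∈ substDom Ψ
      · have hc := hclosed n hmem
        rw [h] at hc
        simp [UTy.params] at hc
      · simp only [substDom, Set.mem_setOf_eq, not_not] at hmem
        rw [hmem] at h
        injection h with hk
        rw [phi1_param hmem]
        simp only [UTy.subst]
        rw [phi2_param hmem, hk]
    · rw [phi1_con0 h]; rfl
    · rw [phi1_con1 h]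
      simp only [UTy.subst]
      rw [phi2_con1 h]
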